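/- For any positive real channel gains g_{j,k}^{(s)} > 0 (for j,k ∈ {1,2}, s ∈ {1,2}), the channel selection game always has at least one pure Nash equilibrium. That is, there exists (α₁, α₂) ∈ {0,1}² such that for each player k ∈ {1,2}, u_k(α_k, α_{-k}) ≥ u_k(α_k', α_{-k}) for all α_k' ∈ {0,1}. -/
import Mathlib


open Real Set

/-- Utility of a player with direct gains `gk1 gk2`, cross gains `gi1 gi2`,
own action `a`, opponent action `b`. -/
noncomputable def u (gk1 gk2 gi1 gi2 a b : ℝ) : ℝ :=
  Real.logb 2 (1 + a * gk1 / (1 + b * gi1)) +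
  Real.logb 2 (1 + (1 - a) * gk2 / (1 + (1 - b) * gi2))

lemma u_11 (gk1 gk2 gi1 gi2 : ℝ) :
    u gk1 gk2 gi1 gi2 1 1 = Real.logb 2 (1 + gk1 / (1 + gi1)) := by
  simp [u]

lemma u_01 (gk1 gk2 gi1 gi2 : ℝ) :
    u gk1 gk2 gi1 gi2 0 1 = Real.logb 2 (1 + gk2) := by
  simp [u]

lemma u_10 (gk1 gk2 gi1 gi2 : ℝ) :
    u gk1 gk2 gi1 gi2 1 0 = Real.logb 2 (1 + gk1) := by
  simp [u]

lemma u_00 (gk1 gk2 gi1 gi2 : ℝ) :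
    u gk1 gk2 gi1 gi2 0 0 = Real.logb 2 (1 + gk2 / (1 + gi2)) := by
  simp [u]

/-- Monotonicity: if a player prefers channel 1 when the opponent is on
channel 1, then they also prefer channel 1 when the opponent is on channel 2. -/
lemma u_mono (gk1 gk2 gi1 gi2 : ℝ) (h1 : 0 < gk1) (h2 : 0 < gk2)
    (h3 : 0 < gi1) (h4 : 0 < gi2)
    (h : u gk1 gk2 gi1 gi2 0 1 ≤ u gk1 gk2 gi1 gi2 1 1) :
    u gk1 gk2 gi1 gi2 0 0 ≤ u gk1 gk2 gi1 gi2 1 0 := by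
  rw [u_01, u_11] at h
  rw [u_00, u_10]
  have hb : (1:ℝ) < 2 := one_lt_two
  have hgi1 : (0:ℝ) < 1 + gi1 := by linarith
  have hgi2 : (0:ℝ) < 1 + gi2 := by linarith
  have hx : (0:ℝ) < 1 + gk2 := by linarith
  have hy : (0:ℝ) < 1 + gk1 / (1 + gi1) := by positivity
  have h' : 1 + gk2 ≤ 1 + gk1 / (1 + gi1) := (Real.logb_le_logb hb hx hy).mp h
  have h1' : gk1 / (1 + gi1) ≤ gk1 := div_le_self h1.le (by linarith)
  have h2' : gk2 / (1 + gi2) ≤ gk2 := div_le_self h2.le (by linarith)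
  have hx' : (0:ℝ) < 1 + gk2 / (1 + gi2) := by positivity
  exact Real.logb_le_logb_of_le hb hx' (by linarith)

/-- The channel selection game always has at least one pure Nash equilibrium. -/
theorem cs_exists_pure_NE
    (g111 g112 g121 g122 g211 g212 g221 g222 : ℝ)
    (h111 : 0 < g111) (h112 : 0 < g112) (h121 : 0 < g121) (h122 : 0 < g122)
    (h211 : 0 < g211) (h212 : 0 < g212) (h221 : 0 < g221) (h222 : 0 < g222) :
    ∃ a1 a2 : ℝ, a1 ∈ ({0, 1} : Set ℝ) ∧ a2 ∈ ({0, 1} : Set ℝ) ∧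
      (∀ a1' ∈ ({0, 1} : Set ℝ),
        u g111 g112 g121 g122 a1' a2 ≤ u g111 g112 g121 g122 a1 a2) ∧
      (∀ a2' ∈ ({0, 1} : Set ℝ),
        u g221 g222 g211 g212 a2' a1 ≤ u g221 g222 g211 g212 a2 a1) := by
  have h0 : (0:ℝ) ∈ ({0, 1} : Set ℝ) := by simp
  have h1 : (1:ℝ) ∈ ({0, 1} : Set ℝ) := by simp
  by_cases hB1 : u g221 g222 g211 g212 0 1 ≤ u g221 g222 g211 g212 1 1
  · by_cases hA1 : u g111 g112 g121 g122 0 1 ≤ u g111 g112 g121 g122 1 1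
    · -- NE (1,1)
      refine ⟨1, 1, h1, h1, ?_, ?_⟩ <;> rintro x (rfl | rfl) <;>
        first | exact hA1 | exact hB1 | exact le_refl _
    · -- NE (0,1)
      refine ⟨0, 1, h0, h1, ?_, ?_⟩ <;> rintro x (rfl | rfl)
      · exact le_refl _
      · exact le_of_not_ge hA1
      · exact u_mono g221 g222 g211 g212 h221 h222 h211 h212 hB1
      · exact le_refl _
  · by_cases hA0 : u g111 g112 g121 g122 0 0 ≤ u g111 g112 g121 g122 1 0
    · -- NE (1,0)
      refine ⟨1, 0, h1, h0, ?_, ?_⟩ <;> rintro x (rfl | rfl)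
      · exact hA0
      · exact le_refl _
      · exact le_refl _
      · exact le_of_not_ge hB1
    · by_cases hB0 : u g221 g222 g211 g212 0 0 ≤ u g221 g222 g211 g212 1 0
      · -- NE (0,1)
        have hA1 : ¬ u g111 g112 g121 g122 0 1 ≤ u g111 g112 g121 g122 1 1 :=
          fun h => hA0 (u_mono g111 g112 g121 g122 h111 h112 h121 h122 h)
        refine ⟨0, 1, h0, h1, ?_, ?_⟩ <;> rintro x (rfl | rfl)
        · exact le_refl _
        · exact le_of_not_ge hA1
        · exact hB0
        · exact le_refl _
      · -- NE (0,0)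
        refine ⟨0, 0, h0, h0, ?_, ?_⟩ <;> rintro x (rfl | rfl)
        · exact le_refl _
        · exact le_of_not_ge hA0
        · exact le_refl _
        · exact le_of_not_ge hB0
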